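/- Let X be a nonempty complete subset of a metric space (Y,d), let α, ε ≥ 0 with α + ε < 1, and let F be a multivalued mapping from X to Y with nonempty bounded values that is an α-contraction. Assume that for each x ∈ X with x ∉ F(x) there exists z ∈ X with z ≠ x and (1−ε) d(x,z) ≤ d(x,F(x)) − d(z,F(x)). Then for each x ∈ X with x ∉ F(x) there exists z ∈ X with z ≠ x and (1−α−ε) d(x,z) ≤ d(x,F(x)) − d(z,F(z)), and consequently F has a fixed point. -/
import Mathlib


open Metric Filter

open Topology

/-- **Theorem 3.4.** Let `X` be a nonempty complete subset of a metric space `(Y,d)`,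
`α, ε ≥ 0` with `α + ε < 1`, and `F` an `α`-contraction from `X` to `Y` with nonempty
bounded values. Assume for each `x ∈ X` with `x ∉ F(x)` there exists `z ∈ X`, `z ≠ x`,
with `(1−ε)·d(x,z) ≤ d(x,F(x)) − d(z,F(x))`. Then for each `x ∈ X` with `x ∉ F(x)`
there exists `z ∈ X`, `z ≠ x`, with `(1−α−ε)·d(x,z) ≤ d(x,F(x)) − d(z,F(z))`, and
consequently `F` has a fixed point. -/
theorem fixed_point_of_inward_type_condition
    {Y : Type*} [MetricSpace Y] (X : Set Y) (hX : X.Nonempty) (hXc : IsComplete X)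
    (α ε : ℝ) (hα : 0 ≤ α) (hε : 0 ≤ ε) (hαε : α + ε < 1)
    (F : X → Set Y) (hFne : ∀ x, (F x).Nonempty)
    (hFbdd : ∀ x, Bornology.IsBounded (F x))
    (hcontr : ∀ x y : X, hausdorffDist (F y) (F x) ≤ α * dist (y : Y) (x : Y))
    (hcond : ∀ x : X, (x : Y) ∉ F x → ∃ z : X, z ≠ x ∧
      (1 - ε) * dist (x : Y) (z : Y) ≤ infDist (x : Y) (F x) - infDist (z : Y) (F x)) :
    (∀ x : X, (x : Y) ∉ F x → ∃ z : X, z ≠ x ∧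
      (1 - α - ε) * dist (x : Y) (z : Y) ≤
        infDist (x : Y) (F x) - infDist (z : Y) (F z)) ∧
    ∃ x : X, (x : Y) ∈ F x := by
  have hc : (0:ℝ) < 1 - α - ε := by linarith
  set c : ℝ := 1 - α - ε with hcdef
  set φ : X → ℝ := fun x => infDist (x : Y) (F x) with hφdef
  have hφ0 : ∀ x : X, 0 ≤ φ x := fun x => infDist_nonneg
  have hne : ∀ x z : X, EMetric.hausdorffEdist (F x) (F z) ≠ ⊤ := fun x z =>
    hausdorffEdist_ne_top_of_nonempty_of_bounded (hFne x) (hFne z) (hFbdd x) (hFbdd z)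
  have hstep : ∀ x z : X, φ z ≤ infDist (z : Y) (F x) + α * dist (x : Y) (z : Y) := by
    intro x z
    have h1 : infDist (z : Y) (F z) ≤ infDist (z : Y) (F x) + hausdorffDist (F x) (F z) :=
      infDist_le_infDist_add_hausdorffDist (hne x z)
    have h3 : hausdorffDist (F x) (F z) ≤ α * dist (x : Y) (z : Y) := hcontr z x
    simpa using h1.trans (by linarith)
  -- Part 1
  have part1 : ∀ x : X, (x : Y) ∉ F x → ∃ z : X, z ≠ x ∧
      c * dist (x : Y) (z : Y) ≤ φ x - φ z := by
    intro x hx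
    obtain ⟨z, hzx, hz⟩ := hcond x hx
    refine ⟨z, hzx, ?_⟩
    have h1 := hstep x z
    have h2 : (1 - ε) * dist (x : Y) (z : Y) ≤ φ x - infDist (z : Y) (F x) := hz
    have hd : 0 ≤ dist (x : Y) (z : Y) := dist_nonneg
    nlinarith
  refine ⟨part1, ?_⟩
  -- Part 2: a fixed point exists
  by_contra hno
  push_neg at hno
  have P : ∀ x : X, ∃ z : X, z ≠ x ∧ c * dist (x : Y) (z : Y) ≤ φ x - φ z :=
    fun x => part1 x (hno x)
  haveI : CompleteSpace X := hXc.completeSpace_coe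
  set S : X → Set X := fun x => {z : X | c * dist (x : Y) (z : Y) ≤ φ x - φ z} with hSdef
  have hself : ∀ x : X, x ∈ S x := by intro x; simp [hSdef]
  have hSanti : ∀ x z : X, z ∈ S x → φ z ≤ φ x := by
    intro x z hz
    have : 0 ≤ c * dist (x : Y) (z : Y) := mul_nonneg hc.le dist_nonneg
    have hz' : c * dist (x : Y) (z : Y) ≤ φ x - φ z := hz
    linarith
  have hStrans : ∀ x z w : X, z ∈ S x → w ∈ S z → w ∈ S x := by
    intro x z w hz hw
    have hz' : c * dist (x : Y) (z : Y) ≤ φ x - φ z := hz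
    have hw' : c * dist (z : Y) (w : Y) ≤ φ z - φ w := hw
    have htri := dist_triangle (x : Y) (z : Y) (w : Y)
    have := mul_le_mul_of_nonneg_left htri hc.le
    show c * dist (x : Y) (w : Y) ≤ φ x - φ w
    linarith
  have hbdd : ∀ x : X, BddBelow (φ '' S x) := by
    intro x
    exact ⟨0, by rintro b ⟨z, -, rfl⟩; exact hφ0 z⟩
  set m : X → ℝ := fun x => sInf (φ '' S x) with hmdef
  have hm_le : ∀ x z : X, z ∈ S x → m x ≤ φ z := by
    intro x z hz
    exact csInf_le (hbdd x) ⟨z, hz, rfl⟩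
  have hchoice : ∀ (n : ℕ) (x : X), ∃ z : X, z ∈ S x ∧ φ z < m x + (1/2 : ℝ)^n := by
    intro n x
    have hlt : m x < m x + (1/2 : ℝ)^n := by
      have : (0:ℝ) < (1/2 : ℝ)^n := by positivity
      linarith
    obtain ⟨b, ⟨z, hzS, rfl⟩, hb⟩ :=
      exists_lt_of_csInf_lt (⟨φ x, x, hself x, rfl⟩ : (φ '' S x).Nonempty) hlt
    exact ⟨z, hzS, hb⟩
  choose g hgS hgm using hchoice
  obtain ⟨x0, hx0⟩ := hX
  set u : ℕ → X := fun n => Nat.rec (⟨x0, hx0⟩ : X) (fun n x => g n x) n with hudef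
  have huS : ∀ n, u (n+1) ∈ S (u n) := fun n => hgS n (u n)
  have hum : ∀ n, φ (u (n+1)) < m (u n) + (1/2 : ℝ)^n := fun n => hgm n (u n)
  have hchain : ∀ n k : ℕ, n ≤ k → u k ∈ S (u n) := by
    intro n k hnk
    induction k, hnk using Nat.le_induction with
    | base => exact hself (u n)
    | succ k hnk ih => exact hStrans _ _ _ ih (huS k)
  have hanti : Antitone (fun n => φ (u n)) :=
    antitone_nat_of_succ_le fun n => hSanti _ _ (huS n)
  have hbddb : BddBelow (Set.range fun n => φ (u n)) :=
    ⟨0, by rintro b ⟨n, rfl⟩; exact hφ0 (u n)⟩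
  set L : ℝ := ⨅ n, φ (u n) with hLdef
  have hL : Tendsto (fun n => φ (u n)) atTop (𝓝 L) := tendsto_atTop_ciInf hanti hbddb
  have hLle : ∀ n, L ≤ φ (u n) := fun n => ciInf_le hbddb n
  -- Cauchy
  have hkey : ∀ n k : ℕ, n ≤ k → c * dist (u n) (u k) ≤ φ (u n) - φ (u k) := by
    intro n k hnk
    have := hchain n k hnk
    simpa [hSdef, Subtype.dist_eq] using this
  have hcauchy : CauchySeq u := by
    apply cauchySeq_of_le_tendsto_0 (fun N => (φ (u N) - L) / c)
    · intro n k N hn hk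
      rcases le_total n k with h | h
      · have h1 := hkey n k h
        have h2 : φ (u n) - φ (u k) ≤ φ (u N) - L :=
          sub_le_sub (hanti hn) (hLle k)
        rw [le_div_iff₀ hc, mul_comm]
        linarith
      · have h1 := hkey k n h
        have h2 : φ (u k) - φ (u n) ≤ φ (u N) - L :=
          sub_le_sub (hanti hk) (hLle n)
        rw [dist_comm, le_div_iff₀ hc, mul_comm]
        linarith
    · have : Tendsto (fun N => φ (u N) - L) atTop (𝓝 (L - L)) := hL.sub tendsto_const_nhds
      simpa using this.div_const c
  obtain ⟨xs, hxs⟩ := cauchySeq_tendsto_of_complete hcauchy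
  have hxsY : Tendsto (fun n => (u n : Y)) atTop (𝓝 (xs : Y)) :=
    (continuous_subtype_val.tendsto xs).comp hxs
  -- φ is continuous along u
  have hφxs : Tendsto (fun n => φ (u n)) atTop (𝓝 (φ xs)) := by
    rw [tendsto_iff_dist_tendsto_zero]
    apply squeeze_zero (fun n => dist_nonneg)
      (g := fun n => (1 + α) * dist (u n : Y) (xs : Y))
    · intro n
      have h1 : φ xs ≤ φ (u n) + (1 + α) * dist (u n : Y) (xs : Y) := by
        have := hstep (u n) xs
        have h2 : infDist (xs : Y) (F (u n)) ≤ infDist ((u n : X) : Y) (F (u n)) +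
            dist (xs : Y) (u n : Y) := infDist_le_infDist_add_dist
        have hd := dist_nonneg (x := (u n : Y)) (y := (xs : Y))
        rw [dist_comm (xs:Y)] at h2
        nlinarith
      have h2 : φ (u n) ≤ φ xs + (1 + α) * dist (u n : Y) (xs : Y) := by
        have := hstep xs (u n)
        have h2 : infDist ((u n : X) : Y) (F xs) ≤ infDist (xs : Y) (F xs) +
            dist (u n : Y) (xs : Y) := infDist_le_infDist_add_dist
        have hd := dist_nonneg (x := (u n : Y)) (y := (xs : Y))
        rw [dist_comm (xs:Y)] at this
        nlinarith
      rw [Real.dist_eq, abs_le]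
      constructor <;> linarith
    · have : Tendsto (fun n => dist (u n : Y) (xs : Y)) atTop (𝓝 0) := by
        simpa using tendsto_iff_dist_tendsto_zero.mp hxsY
      simpa using this.const_mul (1 + α)
  have hφxsL : φ xs = L := tendsto_nhds_unique hφxs hL
  -- xs ∈ S (u n) for each n
  have hxsS : ∀ n, xs ∈ S (u n) := by
    intro n
    show c * dist (u n : Y) (xs : Y) ≤ φ (u n) - φ xs
    have h1 : Tendsto (fun k => c * dist (u n : Y) (u k : Y)) atTop
        (𝓝 (c * dist (u n : Y) (xs : Y))) :=
      (tendsto_const_nhds.dist hxsY).const_mul c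
    have h2 : Tendsto (fun k => φ (u n) - φ (u k)) atTop (𝓝 (φ (u n) - φ xs)) := by
      rw [hφxsL]; exact tendsto_const_nhds.sub hL
    refine le_of_tendsto_of_tendsto h1 h2 ?_
    filter_upwards [eventually_ge_atTop n] with k hk
    have := hkey n k hk
    simpa [Subtype.dist_eq] using this
  -- conclude
  obtain ⟨z, hzne, hzle⟩ := P xs
  have hzS : ∀ n, z ∈ S (u n) := fun n => hStrans _ _ _ (hxsS n) hzle
  have hLz : L ≤ φ z := by
    have h2 : Tendsto (fun n => φ z + (1/2 : ℝ)^n) atTop (𝓝 (φ z + 0)) := by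
      exact tendsto_const_nhds.add (tendsto_pow_atTop_nhds_zero_of_lt_one (by norm_num) (by norm_num))
    have h3 : ∀ n, φ (u (n+1)) ≤ φ z + (1/2 : ℝ)^n := by
      intro n
      have := hm_le (u n) z (hzS n)
      linarith [hum n]
    have h4 : ∀ n, L ≤ φ z + (1/2 : ℝ)^n := fun n => (hLle (n+1)).trans (h3 n)
    have := le_of_tendsto_of_tendsto (tendsto_const_nhds : Tendsto (fun _ : ℕ => L) atTop (𝓝 L)) h2 (Eventually.of_forall h4)
    simpa using this
  have hzero : c * dist (xs : Y) (z : Y) ≤ 0 := by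
    rw [← hφxsL] at hLz
    linarith
  have : dist (xs : Y) (z : Y) ≤ 0 := nonpos_of_mul_nonpos_right ?_ hc
  · exact hzne (Subtype.ext ((dist_le_zero.mp this).symm))
  · linarith
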